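/- For every integer g, the ideal J(g) is contained in the ideal of P generated by a₁², a₂, and c₂; consequently, for every integer i ≥ 1 the images of a₂′^i and a₁·a₂′^(i−1) in S(g) are linearly independent over ℚ (in particular both are nonzero). -/

import Mathlib

open MvPolynomial

noncomputable section

/-- The polynomial ring `ℚ[a₁, a₂′, a₂, c₂]`. -/
abbrev P4 : Type := MvPolynomial (Fin 4) ℚ

/-- Weights: `a₁` and `a₂′` have weight 1; `a₂` and `c₂` have weight 2. -/
def wt : Fin 4 → ℕ := ![1, 1, 2, 2]

def a1 : P4 := X 0
def a2' : P4 := X 1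
def a2 : P4 := X 2
def c2 : P4 := X 3

/-- The relation `r₁`. -/
def r1 (g : ℤ) : P4 :=
  C (1064*(g:ℚ) + 3610) * a1^3 - C (1074 : ℚ) * (a1^2 * a2')
    - C (2148*(g:ℚ) + 7272) * (a1 * a2) + C (2160 : ℚ) * (a2 * a2')
    - C (1064*(g:ℚ)^3 + 10830*(g:ℚ)^2 + 36680*(g:ℚ) + 41360) * (a1 * c2)
    + C (1074*(g:ℚ)^2 + 7272*(g:ℚ) + 12288) * (a2' * c2)

/-- The relation `r₂`. -/
def r2 (g : ℤ) : P4 :=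
  - C (6412*(g:ℚ) + 21255) * a1^3 + C (6207 : ℚ) * (a1^2 * a2')
    + C (12414*(g:ℚ) + 40896) * (a1 * a2) - C (11880 : ℚ) * (a2 * a2')
    + C (6412*(g:ℚ)^3 + 63765*(g:ℚ)^2 + 211540*(g:ℚ) + 234480) * (a1 * c2)
    - C (6207*(g:ℚ)^2 + 40896*(g:ℚ) + 68184) * (a2' * c2)

/-- The relation `r₃`. -/
def r3 (g : ℤ) : P4 :=
  - C (22845*(g:ℚ) + 67763) * a1^4 + C (18141 : ℚ) * (a1^3 * a2')
    + C (54423*(g:ℚ) + 146550) * (a1^2 * a2) - C (35640 : ℚ) * (a1 * a2 * a2')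
    + C (45690*(g:ℚ)^3 + 406578*(g:ℚ)^2 + 1184220*(g:ℚ) + 1123060) * (a1^2 * c2)
    - C (54423*(g:ℚ)^2 + 293100*(g:ℚ) + 372648) * (a1 * a2' * c2)
    + C (17820*(g:ℚ) + 24840) * (a2'^2 * c2)
    - C (17820*(g:ℚ) + 24840) * (a2^2)
    - C (18141*(g:ℚ)^3 + 146550*(g:ℚ)^2 + 372648*(g:ℚ) + 283824) * (a2 * c2)
    - C (4569*(g:ℚ)^5 + 67763*(g:ℚ)^4 + 394740*(g:ℚ)^3 + 1123060*(g:ℚ)^2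
        + 1546176*(g:ℚ) + 810432) * (c2^2)

/-- The relation `r₄`. -/
def r4 (g : ℤ) : P4 :=
  C (133 : ℚ) * a1^4 - C (537 : ℚ) * (a1^2 * a2)
    - C (798*(g:ℚ)^2 + 5415*(g:ℚ) + 9170) * (a1^2 * c2)
    + C (1074*(g:ℚ) + 3636) * (a1 * a2' * c2)
    - C (540 : ℚ) * (a2'^2 * c2) + C (540 : ℚ) * (a2^2)
    + C (537*(g:ℚ)^2 + 3636*(g:ℚ) + 6144) * (a2 * c2)
    + C (133*(g:ℚ)^4 + 1805*(g:ℚ)^3 + 9170*(g:ℚ)^2 + 20680*(g:ℚ) + 17472) * (c2^2)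

/-- The relation `r₅`. -/
def r5 (g : ℤ) : P4 :=
  - C (18545*(g:ℚ) + 68407) * a1^4 + C (15261 : ℚ) * (a1^3 * a2')
    + C (45783*(g:ℚ) + 175866) * (a1^2 * a2) - C (31320 : ℚ) * (a1 * a2 * a2')
    + C (37090*(g:ℚ)^3 + 410442*(g:ℚ)^2 + 1499460*(g:ℚ) + 1811300) * (a1^2 * c2)
    - C (45783*(g:ℚ)^2 + 351732*(g:ℚ) + 662976) * (a1 * a2' * c2)
    + C (15660*(g:ℚ) + 72360) * (a2'^2 * c2)
    - C (15660*(g:ℚ) + 72360) * (a2^2)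
    - C (15261*(g:ℚ)^3 + 175866*(g:ℚ)^2 + 662976*(g:ℚ) + 822096) * (a2 * c2)
    - C (3709*(g:ℚ)^5 + 68407*(g:ℚ)^4 + 499820*(g:ℚ)^3 + 1811300*(g:ℚ)^2
        + 3260256*(g:ℚ) + 2334528) * (c2^2)

/-- The ideal `J(g) = (r₁, r₂, r₃, r₄, r₅)`. -/
def Jg (g : ℤ) : Ideal P4 := Ideal.span {r1 g, r2 g, r3 g, r4 g, r5 g}

/-- The quotient map `P → S(g) = P/J(g)`, as a `ℚ`-linear map. -/
def Smk (g : ℤ) : P4 →ₗ[ℚ] P4 ⧸ Jg g := (Ideal.Quotient.mkₐ ℚ (Jg g)).toLinearMap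

/-- `S(g)_i`: the image in `S(g)` of the weighted-degree-`i` homogeneous polynomials. -/
def SComp (g : ℤ) (i : ℕ) : Submodule ℚ (P4 ⧸ Jg g) :=
  (weightedHomogeneousSubmodule ℚ wt i).map (Smk g)

/-- The target ideal `(a₁², a₂, c₂)`. -/
def Ig : Ideal P4 := Ideal.span ({a1^2, a2, c2} : Set P4)

lemma mem_Ig (x y z : P4) : x * a1^2 + y * a2 + z * c2 ∈ Ig := by
  apply Ideal.add_mem
  apply Ideal.add_mem
  · exact Ideal.mul_mem_left _ _ (Ideal.subset_span (by simp))
  · exact Ideal.mul_mem_left _ _ (Ideal.subset_span (by simp))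
  · exact Ideal.mul_mem_left _ _ (Ideal.subset_span (by simp))

lemma r1_mem (g : ℤ) : r1 g ∈ Ig := by
  have h : r1 g =
      (C (1064*(g:ℚ) + 3610) * a1 - C (1074:ℚ) * a2') * a1^2
      + (- C (2148*(g:ℚ) + 7272) * a1 + C (2160:ℚ) * a2') * a2
      + (- C (1064*(g:ℚ)^3 + 10830*(g:ℚ)^2 + 36680*(g:ℚ) + 41360) * a1
         + C (1074*(g:ℚ)^2 + 7272*(g:ℚ) + 12288) * a2') * c2 := by
    unfold r1; ring
  rw [h]; exact mem_Ig _ _ _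

lemma r2_mem (g : ℤ) : r2 g ∈ Ig := by
  have h : r2 g =
      (- C (6412*(g:ℚ) + 21255) * a1 + C (6207:ℚ) * a2') * a1^2
      + (C (12414*(g:ℚ) + 40896) * a1 - C (11880:ℚ) * a2') * a2
      + (C (6412*(g:ℚ)^3 + 63765*(g:ℚ)^2 + 211540*(g:ℚ) + 234480) * a1
         - C (6207*(g:ℚ)^2 + 40896*(g:ℚ) + 68184) * a2') * c2 := by
    unfold r2; ring
  rw [h]; exact mem_Ig _ _ _

lemma r3_mem (g : ℤ) : r3 g ∈ Ig := by
  have h : r3 g =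
      (- C (22845*(g:ℚ) + 67763) * a1^2 + C (18141:ℚ) * (a1 * a2')
        + C (54423*(g:ℚ) + 146550) * a2
        + C (45690*(g:ℚ)^3 + 406578*(g:ℚ)^2 + 1184220*(g:ℚ) + 1123060) * c2) * a1^2
      + (- C (35640:ℚ) * (a1 * a2') - C (17820*(g:ℚ) + 24840) * a2
        - C (18141*(g:ℚ)^3 + 146550*(g:ℚ)^2 + 372648*(g:ℚ) + 283824) * c2) * a2
      + (- C (54423*(g:ℚ)^2 + 293100*(g:ℚ) + 372648) * (a1 * a2')
        + C (17820*(g:ℚ) + 24840) * a2'^2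
        - C (4569*(g:ℚ)^5 + 67763*(g:ℚ)^4 + 394740*(g:ℚ)^3 + 1123060*(g:ℚ)^2
             + 1546176*(g:ℚ) + 810432) * c2) * c2 := by
    unfold r3; ring
  rw [h]; exact mem_Ig _ _ _

lemma r4_mem (g : ℤ) : r4 g ∈ Ig := by
  have h : r4 g =
      (C (133:ℚ) * a1^2 - C (537:ℚ) * a2
        - C (798*(g:ℚ)^2 + 5415*(g:ℚ) + 9170) * c2) * a1^2
      + (C (540:ℚ) * a2 + C (537*(g:ℚ)^2 + 3636*(g:ℚ) + 6144) * c2) * a2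
      + (C (1074*(g:ℚ) + 3636) * (a1 * a2') - C (540:ℚ) * a2'^2
        + C (133*(g:ℚ)^4 + 1805*(g:ℚ)^3 + 9170*(g:ℚ)^2 + 20680*(g:ℚ) + 17472) * c2) * c2 := by
    unfold r4; ring
  rw [h]; exact mem_Ig _ _ _

lemma r5_mem (g : ℤ) : r5 g ∈ Ig := by
  have h : r5 g =
      (- C (18545*(g:ℚ) + 68407) * a1^2 + C (15261:ℚ) * (a1 * a2')
        + C (45783*(g:ℚ) + 175866) * a2
        + C (37090*(g:ℚ)^3 + 410442*(g:ℚ)^2 + 1499460*(g:ℚ) + 1811300) * c2) * a1^2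
      + (- C (31320:ℚ) * (a1 * a2') - C (15660*(g:ℚ) + 72360) * a2
        - C (15261*(g:ℚ)^3 + 175866*(g:ℚ)^2 + 662976*(g:ℚ) + 822096) * c2) * a2
      + (- C (45783*(g:ℚ)^2 + 351732*(g:ℚ) + 662976) * (a1 * a2')
        + C (15660*(g:ℚ) + 72360) * a2'^2
        - C (3709*(g:ℚ)^5 + 68407*(g:ℚ)^4 + 499820*(g:ℚ)^3 + 1811300*(g:ℚ)^2
             + 3260256*(g:ℚ) + 2334528) * c2) * c2 := by
    unfold r5; ring
  rw [h]; exact mem_Ig _ _ _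

lemma Jg_le_Ig (g : ℤ) : Jg g ≤ Ig := by
  rw [Jg, Ideal.span_le]
  rintro r hr
  simp only [Set.mem_insert_iff, Set.mem_singleton_iff] at hr
  rcases hr with rfl | rfl | rfl | rfl | rfl
  · exact r1_mem g
  · exact r2_mem g
  · exact r3_mem g
  · exact r4_mem g
  · exact r5_mem g

/-- Evaluation `a₁ ↦ ε`, `a₂′ ↦ X`, `a₂ ↦ 0`, `c₂ ↦ 0`. -/
def fev : P4 →ₐ[ℚ] DualNumber (Polynomial ℚ) :=
  aeval ![DualNumber.eps, TrivSqZeroExt.inl Polynomial.X, 0, 0]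

lemma fev_vanish (g : ℤ) : ∀ p ∈ Jg g, fev p = 0 := by
  intro p hp
  have hpI : p ∈ Ig := Jg_le_Ig g hp
  have hker : Ig ≤ RingHom.ker (fev.toRingHom) := by
    rw [Ig, Ideal.span_le]
    rintro r hr
    simp only [Set.mem_insert_iff, Set.mem_singleton_iff] at hr
    rcases hr with rfl | rfl | rfl <;>
      simp [fev, a1, a2, c2, RingHom.mem_ker, map_pow, sq, DualNumber.eps_mul_eps]
  exact hker hpI

def Flift (g : ℤ) : (P4 ⧸ Jg g) →ₐ[ℚ] DualNumber (Polynomial ℚ) :=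
  Ideal.Quotient.liftₐ (Jg g) fev (fev_vanish g)

lemma Flift_Smk (g : ℤ) (p : P4) : Flift g (Smk g p) = fev p := by
  simp [Flift, Smk, Ideal.Quotient.liftₐ_apply, Ideal.Quotient.mkₐ_eq_mk,
    Ideal.Quotient.lift_mk]
  exact Ideal.Quotient.lift_mk _ _ _

/-- For every `g`, `J(g) ⊆ (a₁², a₂, c₂)`; consequently, for every `i ≥ 1` the images
of `a₂′^i` and `a₁·a₂′^(i−1)` in `S(g)` are linearly independent over `ℚ`. -/
theorem Jg_le_span_and_linearIndependent (g : ℤ) :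
    Jg g ≤ Ideal.span ({a1^2, a2, c2} : Set P4) ∧
    ∀ i : ℕ, 1 ≤ i → LinearIndependent ℚ ![Smk g (a2'^i), Smk g (a1 * a2'^(i-1))] := by
  constructor
  · exact Jg_le_Ig g
  · intro i hi
    rw [LinearIndependent.pair_iff]
    intro s t hst
    have h0 : Flift g (s • Smk g (a2'^i) + t • Smk g (a1 * a2'^(i-1))) = 0 := by
      rw [hst]; exact map_zero _
    rw [map_add, map_smul, map_smul, Flift_Smk, Flift_Smk] at h0
    have h1 : fev (a2'^i) = TrivSqZeroExt.inl (Polynomial.X ^ i) := by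
      simp [fev, a2', map_pow]
    have h2 : fev (a1 * a2'^(i-1)) = TrivSqZeroExt.inr (Polynomial.X ^ (i-1)) := by
      have ha : fev a1 = DualNumber.eps := by simp [fev, a1]
      have hb : fev (a2'^(i-1)) = TrivSqZeroExt.inl (Polynomial.X^(i-1)) := by
        simp [fev, a2', map_pow]
      rw [map_mul, ha, hb, DualNumber.eps, TrivSqZeroExt.inr_mul_inl]
      congr 1
      simp [op_smul_eq_mul]
    rw [h1, h2] at h0
    have hfst := congrArg TrivSqZeroExt.fst h0
    have hsnd := congrArg TrivSqZeroExt.snd h0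
    simp only [TrivSqZeroExt.fst_add, TrivSqZeroExt.fst_smul, TrivSqZeroExt.fst_inl,
      TrivSqZeroExt.fst_inr, TrivSqZeroExt.snd_add, TrivSqZeroExt.snd_smul,
      TrivSqZeroExt.snd_inl, TrivSqZeroExt.snd_inr, TrivSqZeroExt.fst_zero,
      TrivSqZeroExt.snd_zero, smul_zero, add_zero, zero_add] at hfst hsnd
    have hX : (Polynomial.X : Polynomial ℚ) ^ i ≠ 0 := pow_ne_zero _ Polynomial.X_ne_zero
    have hX' : (Polynomial.X : Polynomial ℚ) ^ (i-1) ≠ 0 := pow_ne_zero _ Polynomial.X_ne_zero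
    constructor
    · rcases smul_eq_zero.mp hfst with h | h
      · exact h
      · exact absurd h hX
    · rcases smul_eq_zero.mp hsnd with h | h
      · exact h
      · exact absurd h hX'
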